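/- If D : S → M is a Jordan (δ,f)-derivation on a 2-torsion-free bimodule M, then for all x, y, z ∈ S: (D(xy)−D(x)y−f(x)δ(y))(zy−yz) + (D(zy)−D(z)y−f(z)δ(y))(xy−yx) = 0. -/

import Mathlib

open MulOpposite

private lemma aux1 {M : Type*} [AddCommGroup M] {a b x y : M}
    (h1 : a = b) (h : x - y = a - b) : x = y := by
  rw [h1, sub_self] at h
  exact sub_eq_zero.mp h

private lemma aux2 {M : Type*} [AddCommGroup M] {a b c d x y : M}
    (h1 : a = b) (h2 : c = d) (h : x - y = (a - b) - (c - d)) : x = y := by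
  rw [h1, h2, sub_self, sub_self, sub_zero] at h
  exact sub_eq_zero.mp h

private lemma aux3 {M : Type*} [AddCommGroup M] {a b c d e g x y : M}
    (h1 : a = b) (h2 : c = d) (h3 : e = g)
    (h : x - y = (a - b) + (c - d) + (e - g)) : x = y := by
  rw [h1, h2, h3, sub_self, sub_self, sub_self, add_zero, add_zero] at h
  exact sub_eq_zero.mp h

/-- Linearized commutator annihilation for a Jordan `(δ,f)`-derivation `D` on a
`2`-torsion-free bimodule `M`. -/
theorem jordan_derivation_linearized_commutator_annihilation
    {R S M : Type*} [CommRing R] [Ring S] [Algebra R S]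
    [AddCommGroup M] [Module S M] [Module Sᵐᵒᵖ M] [SMulCommClass S Sᵐᵒᵖ M]
    (htf : ∀ m : M, 2 • m = 0 → m = 0)
    (δ : S → S) (hδadd : ∀ a b : S, δ (a + b) = δ a + δ b)
    (hδmul : ∀ a b : S, δ (a * b) = δ a * b + a * δ b)
    (f : S → M) (hfadd : ∀ a b : S, f (a + b) = f a + f b)
    (hfleft : ∀ a x : S, f (a * x) = a • f x)
    (hfright : ∀ x a : S, f (x * a) = op a • f x)
    (D : S → M) (hDadd : ∀ a b : S, D (a + b) = D a + D b)
    (hJordan : ∀ x : S, D (x * x) = op x • D x + op (δ x) • f x) :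
    ∀ x y z : S,
      op (z * y - y * z) • (D (x * y) - op y • D x - op (δ y) • f x) +
      op (x * y - y * x) • (D (z * y) - op y • D z - op (δ y) • f z) = 0 := by
  -- Step A : linearization of the Jordan condition
  have hA : ∀ a b : S, D (a * b + b * a) =
      op b • D a + op a • D b + op (δ b) • f a + op (δ a) • f b := by
    intro a b
    have h1 : D ((a + b) * (a + b)) = op (a + b) • D (a + b) + op (δ (a + b)) • f (a + b) :=
      hJordan (a + b)
    rw [show (a + b) * (a + b) = a * a + (a * b + b * a) + b * b from by noncomm_ring] at h1
    simp only [hDadd, hδadd, hfadd, hJordan, op_add, add_smul, smul_add] at h1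
    refine aux1 h1 ?_
    simp only [hDadd, op_add, add_smul, smul_add]
    abel
  -- Step B : D (a * (b * a))
  have hB : ∀ a b : S, D (a * (b * a)) = op (b * a) • D a + op (δ (b * a)) • f a := by
    intro a b
    have h1 := hA a (a * b + b * a)
    rw [show a * (a * b + b * a) + (a * b + b * a) * a
        = (a * a * b + b * (a * a)) + (a * (b * a) + a * (b * a)) from by noncomm_ring,
      hDadd, hA (a * a) b, hA a b, hDadd] at h1
    have h2 : (D (a * (b * a)) - (op (b * a) • D a + op (δ (b * a)) • f a))
        + (D (a * (b * a)) - (op (b * a) • D a + op (δ (b * a)) • f a)) = 0 := by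
      refine aux1 h1 ?_
      simp only [hδadd, hδmul, hfadd, hfright, hJordan, hDadd, op_add, op_mul, add_smul,
        mul_smul, smul_add, mul_add, add_mul, mul_assoc]
      abel
    have h3 := htf (D (a * (b * a)) - (op (b * a) • D a + op (δ (b * a)) • f a))
      (by rw [two_smul]; exact h2)
    exact sub_eq_zero.mp h3
  -- Step W : the commutator annihilation (unpolarized)
  have hW : ∀ a b : S,
      op (a * b - b * a) • (D (a * b) - op b • D a - op (δ b) • f a) = 0 := by
    intro a b
    have h1 := hA a (b * (a * b))
    rw [hB b a,
      show a * (b * (a * b)) + b * (a * b) * a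
        = (a * b) * (a * b) + (b * a) * (b * a) from by noncomm_ring,
      hDadd, hJordan (a * b), hJordan (b * a)] at h1
    have h2 := congrArg (fun m => op (b * a) • m) (hA a b)
    refine aux2 h1 h2 ?_
    simp only [hδadd, hδmul, hfadd, hfright, hJordan, hDadd, op_add, op_mul, op_sub,
      add_smul, sub_smul, mul_smul, smul_add, smul_sub, mul_add, add_mul, mul_assoc]
    abel
  -- polarize in the first variable
  intro x y z
  refine aux3 (hW (x + z) y) (hW x y).symm (hW z y).symm ?_
  simp only [hδadd, hδmul, hfadd, hfright, hDadd, op_add, op_mul, op_sub, add_smul,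
    sub_smul, mul_smul, smul_add, smul_sub, mul_add, add_mul, sub_mul, mul_sub, mul_assoc]
  abel
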